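/- Fix functions a, b : ℕ → ℕ with a(n) = o(log log n) and b(n) = o(n / log n). Then for all sufficiently large n, there is no (a(n), b(n))-BAPO that solves Majority on all inputs of length n. -/

import Mathlib

open Finset Filter Asymptotics

/-- An `(a, b)`-BAPO (bounded attention prefix oracle): a prefix oracle `f` outputting
`a` bits, a binary attention function `g`, and a suffix oracle `h` that receives the
prefix-oracle output, an attended set of at most `b` (token, 1-based index) pairs from
the prefix, the suffix, and the split index. -/
structure BAPO (Sigma : Type) (Out : Type) (a b : ℕ) where
  f : List Sigma → (Fin a → Bool)
  g : List Sigma → ℕ → Sigma → ℕ → Bool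
  h : (Fin a → Bool) → Finset (Sigma × ℕ) → List Sigma → ℕ → Out

namespace BAPO

variable {Sigma Out : Type} {a b : ℕ}

/-- The set `𝔾 = {(xᵢ, i) : 1 ≤ i ≤ k, g(suffix, k, xᵢ, i) = 1}` of attended
candidates for a given prefix and suffix. -/
noncomputable def cands (M : BAPO Sigma Out a b) (pre suf : List Sigma) :
    Finset (Sigma × ℕ) :=
  letI := Classical.decEq Sigma
  (Finset.univ.filter fun i : Fin pre.length =>
      M.g suf pre.length (pre.get i) ((i : ℕ) + 1) = true).image
    fun i => (pre.get i, (i : ℕ) + 1)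

/-- The BAPO outputs `y` on input `x`: for every split index `k < |x|` and every
attended set `G ⊆ 𝔾` with `|G| = min b |𝔾|`, the suffix oracle outputs `y`. -/
def SolvesOn (M : BAPO Sigma Out a b) (x : List Sigma) (y : Out) : Prop :=
  ∀ k, k < x.length →
    ∀ G : Finset (Sigma × ℕ), G ⊆ M.cands (x.take k) (x.drop k) →
      G.card = min b (M.cands (x.take k) (x.drop k)).card →
      M.h (M.f (x.take k)) G (x.drop k) k = y

/-- The BAPO outputs a *correct* answer (one satisfying `good`) on input `x`:
for every split index `k < |x|` and every attended set `G ⊆ 𝔾` with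
`|G| = min b |𝔾|`, the suffix oracle's output satisfies `good`. -/
def SolvesOnP (M : BAPO Sigma Out a b) (x : List Sigma) (good : Out → Prop) : Prop :=
  ∀ k, k < x.length →
    ∀ G : Finset (Sigma × ℕ), G ⊆ M.cands (x.take k) (x.drop k) →
      G.card = min b (M.cands (x.take k) (x.drop k)).card →
      good (M.h (M.f (x.take k)) G (x.drop k) k)

end BAPO

/-! ### Auxiliary lemmas for the lower bound -/

lemma bapo_count_false_add_count_true (l : List Bool) :
    l.count false + l.count true = l.length := by
  induction l with
  | nil => simp
  | cons h t ih => cases h <;> simp [List.count_cons] <;> omega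

lemma bapo_count_true_ofFn {k : ℕ} (u : Fin k → Bool) :
    (List.ofFn u).count true = (Finset.univ.filter fun i => u i = true).card := by
  induction k with
  | zero => simp
  | succ k ih =>
    rw [List.ofFn_succ, List.count_cons, ih (fun i => u i.succ)]
    rw [Finset.card_filter, Finset.card_filter, Fin.sum_univ_succ]
    cases h : u 0 <;> simp [h] <;> omega

/-- A prefix template `(D, v)` can be completed to a prefix with any feasible
number of `true`s. -/
lemma bapo_exists_prefix {k : ℕ} (D : Finset (Fin k)) (v : Fin k → Bool) (t : ℕ)
    (h1 : (D.filter fun i => v i = true).card ≤ t)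
    (h2 : t ≤ (D.filter fun i => v i = true).card + (k - D.card)) :
    ∃ u : Fin k → Bool, (∀ i ∈ D, u i = v i) ∧ (List.ofFn u).count true = t := by
  classical
  set cD := (D.filter fun i => v i = true).card with hcd
  have hcompl : Dᶜ.card = k - D.card := by
    rw [Finset.card_compl, Fintype.card_fin]
  obtain ⟨S, hS, hScard⟩ := Finset.exists_subset_card_eq (show t - cD ≤ Dᶜ.card by omega)
  refine ⟨fun i => if i ∈ D then v i else decide (i ∈ S), fun i hi => if_pos hi, ?_⟩
  rw [bapo_count_true_ofFn]
  have hsplit : (Finset.univ.filter fun i => (if i ∈ D then v i else decide (i ∈ S)) = true)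
      = (D.filter fun i => v i = true) ∪ S := by
    ext i
    by_cases hiD : i ∈ D
    · have hiS : i ∉ S := fun hiS => (Finset.mem_compl.mp (hS hiS)) hiD
      simp [hiD, hiS]
    · simp [hiD]
  have hdisj : Disjoint (D.filter fun i => v i = true) S := by
    rw [Finset.disjoint_left]
    intro i hi hiS
    exact (Finset.mem_compl.mp (hS hiS)) (Finset.mem_filter.mp hi).1
  rw [hsplit, Finset.card_union_of_disjoint hdisj, hScard, ← hcd]
  omega

lemma bapo_mem_cands {a b : ℕ} (M : BAPO Bool Bool a b) (pre suf : List Bool) (w : Bool) (j : ℕ) :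
    (w, j) ∈ M.cands pre suf ↔
      ∃ (i : ℕ) (h : i < pre.length), pre.get ⟨i, h⟩ = w ∧ i + 1 = j ∧
        M.g suf pre.length w (i + 1) = true := by
  classical
  simp only [BAPO.cands, Finset.mem_image, Finset.mem_filter, Finset.mem_univ, true_and,
    Prod.mk.injEq]
  constructor
  · rintro ⟨i, hg, hw, hj⟩
    exact ⟨(i : ℕ), i.isLt, hw, hj, hw ▸ hg⟩
  · rintro ⟨i, h, hw, hj, hg⟩
    exact ⟨⟨i, h⟩, hw ▸ hg, hw, hj⟩

/-- One step of the adversary construction: fixing at most `b` extra positions of the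
prefix template, the attended set for a single suffix can be pinned down. -/
lemma bapo_step {a b : ℕ} (M : BAPO Bool Bool a b) (k : ℕ) (suf : List Bool)
    (D : Finset (Fin k)) (v : Fin k → Bool) :
    ∃ (D' : Finset (Fin k)) (v' : Fin k → Bool) (G : Finset (Bool × ℕ)),
      D ⊆ D' ∧ (∀ i ∈ D, v' i = v i) ∧ D'.card ≤ D.card + b ∧
      ∀ (pre : List Bool), pre.length = k →
        (∀ i ∈ D', ∀ (h : (i : ℕ) < pre.length), pre.get ⟨(i : ℕ), h⟩ = v' i) →
        G ⊆ M.cands pre suf ∧ G.card = min b (M.cands pre suf).card := by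
  classical
  set w : Fin k → Bool := fun i =>
    if i ∈ D then v i else if M.g suf k true ((i:ℕ)+1) = true then true else false with hw
  have hwD : ∀ i ∈ D, w i = v i := fun i hi => by simp [hw, if_pos hi]
  set A : Finset (Fin k) :=
    Finset.univ.filter (fun i => M.g suf k (w i) ((i:ℕ)+1) = true) with hA
  have hAg : ∀ i ∈ A, M.g suf k (w i) ((i:ℕ)+1) = true := fun i hi => (Finset.mem_filter.mp hi).2
  have hkey : ∀ i : Fin k, i ∉ A → ∀ c : Bool, (i ∈ D → c = v i) →
      M.g suf k c ((i:ℕ)+1) ≠ true := by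
    intro i hiA c hc hgc
    apply hiA
    rw [hA, Finset.mem_filter]
    refine ⟨Finset.mem_univ _, ?_⟩
    by_cases hiD : i ∈ D
    · rw [hwD i hiD, ← hc hiD]; exact hgc
    · simp only [hw, if_neg hiD]
      by_cases hgt : M.g suf k true ((i:ℕ)+1) = true
      · simpa [hgt]
      · cases c with
        | true => exact absurd hgc hgt
        | false => simpa [hgt] using hgc
  by_cases hcase : b ≤ A.card
  · -- case 1: pick `b` attendable positions and pin them
    obtain ⟨P, hPA, hPcard⟩ := Finset.exists_subset_card_eq hcase
    refine ⟨D ∪ P, w, P.image (fun i => (w i, (i:ℕ)+1)), Finset.subset_union_left, hwD,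
      le_trans (Finset.card_union_le _ _) (by omega), ?_⟩
    intro pre hp hcomp
    have hsub : P.image (fun i => (w i, (i:ℕ)+1)) ⊆ M.cands pre suf := by
      intro x hx
      obtain ⟨i, hiP, rfl⟩ := Finset.mem_image.mp hx
      rw [bapo_mem_cands]
      have hilt : (i : ℕ) < pre.length := hp ▸ i.isLt
      refine ⟨(i : ℕ), hilt, hcomp i (Finset.mem_union_right _ hiP) hilt, rfl, ?_⟩
      rw [hp]; exact hAg i (hPA hiP)
    have hinj : Set.InjOn (fun i : Fin k => (w i, (i:ℕ)+1)) ↑P :=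
      fun x _ y _ hxy => Fin.ext (by simpa using congrArg Prod.snd hxy)
    have hGcard : (P.image (fun i => (w i, (i:ℕ)+1))).card = b := by
      rw [Finset.card_image_of_injOn hinj, hPcard]
    refine ⟨hsub, ?_⟩
    have hble : b ≤ (M.cands pre suf).card :=
      le_of_eq_of_le hGcard.symm (Finset.card_le_card hsub)
    rw [hGcard, min_eq_left hble]
  · -- case 2: fewer than `b` attendable positions; pin all of them
    refine ⟨D ∪ A, w, A.image (fun i => (w i, (i:ℕ)+1)), Finset.subset_union_left, hwD,
      le_trans (Finset.card_union_le _ _) (by omega), ?_⟩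
    intro pre hp hcomp
    have hEq : M.cands pre suf = A.image (fun i => (w i, (i:ℕ)+1)) := by
      apply Finset.Subset.antisymm
      · intro x hx
        obtain ⟨c, j⟩ := x
        obtain ⟨ii, hilt, hget, hj, hg⟩ := (bapo_mem_cands M pre suf c j).mp hx
        rw [hp] at hg
        have hiltk : ii < k := hp ▸ hilt
        set i : Fin k := ⟨ii, hiltk⟩ with hi
        have hiA : i ∈ A := by
          by_contra hiA
          refine hkey i hiA c ?_ hg
          intro hiD
          rw [← hget, hcomp i (Finset.mem_union_left _ hiD) hilt, hwD i hiD]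
        have hcw : c = w i := by
          rw [← hget, hcomp i (Finset.mem_union_right _ hiA) hilt]
        rw [Finset.mem_image]
        exact ⟨i, hiA, by rw [← hcw, ← hj]⟩
      · intro x hx
        obtain ⟨i, hiA, rfl⟩ := Finset.mem_image.mp hx
        rw [bapo_mem_cands]
        have hilt : (i : ℕ) < pre.length := hp ▸ i.isLt
        refine ⟨(i : ℕ), hilt, hcomp i (Finset.mem_union_right _ hiA) hilt, rfl, ?_⟩
        rw [hp]; exact hAg i hiA
    have hcardle : (A.image (fun i => (w i, (i:ℕ)+1))).card ≤ b :=
      le_of_lt (lt_of_le_of_lt Finset.card_image_le (not_le.mp hcase))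
    rw [hEq]
    exact ⟨Finset.Subset.refl _, (min_eq_right hcardle).symm⟩

/-- The adversary construction iterated over a list of suffixes. -/
lemma bapo_template {a b : ℕ} (M : BAPO Bool Bool a b) (k : ℕ) (L : List (List Bool)) :
    ∃ (D : Finset (Fin k)) (v : Fin k → Bool), D.card ≤ b * L.length ∧
      ∀ suf ∈ L, ∃ G : Finset (Bool × ℕ),
        ∀ (pre : List Bool), pre.length = k →
          (∀ i ∈ D, ∀ (h : (i : ℕ) < pre.length), pre.get ⟨(i : ℕ), h⟩ = v i) →
          G ⊆ M.cands pre suf ∧ G.card = min b (M.cands pre suf).card := by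
  induction L with
  | nil => exact ⟨∅, fun _ => false, by simp, by simp⟩
  | cons suf L ih =>
    obtain ⟨D, v, hcard, hG⟩ := ih
    obtain ⟨D', v', G, hDD', hvv', hcard', hGs⟩ := bapo_step M k suf D v
    refine ⟨D', v', by rw [List.length_cons, Nat.mul_succ]; omega, ?_⟩
    intro s hs
    rcases List.mem_cons.mp hs with rfl | hs'
    · exact ⟨G, fun pre hp hcomp => hGs pre hp hcomp⟩
    · obtain ⟨G', hG'⟩ := hG s hs'
      refine ⟨G', fun pre hp hcomp => hG' pre hp ?_⟩
      intro i hi h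
      rw [hcomp i (hDD' hi) h, hvv' i hi]

/-- The suffixes used in the fooling argument. -/
def bapoSuf (s m : ℕ) : List Bool :=
  List.replicate s true ++ List.replicate (m - s) false

lemma bapoSuf_length {s m : ℕ} (h : s ≤ m) : (bapoSuf s m).length = m := by
  simp [bapoSuf]; omega

lemma bapoSuf_count_true (s m : ℕ) : (bapoSuf s m).count true = s := by
  simp [bapoSuf, List.count_append, List.count_replicate]

lemma bapo_eventually_bound (a b : ℕ → ℕ)
    (ha : (fun n : ℕ => (a n : ℝ)) =o[atTop] fun n : ℕ => Real.log (Real.log n))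
    (hb : (fun n : ℕ => (b n : ℝ)) =o[atTop] fun n : ℕ => (n : ℝ) / Real.log n) :
    ∀ᶠ n : ℕ in atTop, 2 * ((2^(a n) + 1) * (b n + 1) + 2^(a n) + 2) ≤ n := by
  have l2 : (0:ℝ) < Real.log 2 := Real.log_pos (by norm_num)
  have hA := ha.bound (show (0:ℝ) < (Real.log 2)⁻¹ by positivity)
  have hB := hb.bound (show (0:ℝ) < 1/100 by norm_num)
  have hLn : ∀ᶠ n : ℕ in atTop, |Real.log ((n:ℝ))| ≤ (1/100) * |(n:ℝ)| :=
    tendsto_natCast_atTop_atTop.eventually (Real.isLittleO_log_id_atTop.bound (by norm_num))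
  have hlog2 : ∀ᶠ n : ℕ in atTop, (2:ℝ) ≤ Real.log (n:ℝ) :=
    tendsto_natCast_atTop_atTop.eventually (Real.tendsto_log_atTop.eventually_ge_atTop 2)
  filter_upwards [hA, hB, hLn, hlog2] with n h1 h2 h3 h4
  simp only [Real.norm_eq_abs] at h1 h2
  set L := Real.log (n : ℝ) with hL
  have hL0 : (0:ℝ) < L := by linarith
  have hM : ((2:ℝ))^(a n) ≤ L := by
    have h1' : (a n : ℝ) * Real.log 2 ≤ Real.log L := by
      have hlogL : (0:ℝ) ≤ Real.log L := Real.log_nonneg (by linarith)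
      rw [abs_of_nonneg (by positivity : (0:ℝ) ≤ (a n:ℝ)), abs_of_nonneg hlogL] at h1
      calc (a n : ℝ) * Real.log 2 ≤ ((Real.log 2)⁻¹ * Real.log L) * Real.log 2 :=
            mul_le_mul_of_nonneg_right h1 l2.le
        _ = Real.log L := by field_simp
    calc ((2:ℝ))^(a n) = Real.exp ((a n : ℝ) * Real.log 2) := by
          rw [Real.exp_nat_mul, Real.exp_log (by norm_num : (0:ℝ) < 2)]
      _ ≤ Real.exp (Real.log L) := Real.exp_le_exp.mpr h1'
      _ = L := Real.exp_log hL0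
  have hB' : (b n : ℝ) * L ≤ (n:ℝ)/100 := by
    rw [abs_of_nonneg (by positivity : (0:ℝ) ≤ (b n:ℝ)),
      abs_of_nonneg (div_nonneg (by positivity) hL0.le)] at h2
    calc (b n:ℝ) * L ≤ ((1/100) * ((n:ℝ)/L)) * L := mul_le_mul_of_nonneg_right h2 hL0.le
      _ = (n:ℝ)/100 := by field_simp
  have hn100 : 100 * L ≤ (n:ℝ) := by
    rw [abs_of_nonneg hL0.le, abs_of_nonneg (by positivity : (0:ℝ) ≤ (n:ℝ))] at h3
    linarith
  have goalR : 2 * ((((2:ℝ))^(a n) + 1) * ((b n:ℝ) + 1) + ((2:ℝ))^(a n) + 2) ≤ (n:ℝ) := by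
    have hM0 : (0:ℝ) ≤ ((2:ℝ))^(a n) := by positivity
    have hB0 : (0:ℝ) ≤ (b n:ℝ) := by positivity
    nlinarith [mul_nonneg (sub_nonneg.mpr hM) hB0,
      mul_nonneg (by linarith : (0:ℝ) ≤ L - 2) hB0]
  exact_mod_cast goalR

/-- **Majority is hard even with near-linear attention.** Fix functions
`a, b : ℕ → ℕ` with `a(n) = o(log log n)` and `b(n) = o(n / log n)`. Then for all
sufficiently large `n`, there is no `(a(n), b(n))`-BAPO solving `Majority`
on all inputs of length `n`. -/
theorem majority_hard_near_linear_attention (a b : ℕ → ℕ)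
    (ha : (fun n : ℕ => (a n : ℝ)) =o[atTop] fun n : ℕ => Real.log (Real.log n))
    (hb : (fun n : ℕ => (b n : ℝ)) =o[atTop] fun n : ℕ => (n : ℝ) / Real.log n) :
    ∀ᶠ n in atTop,
      ¬ ∃ M : BAPO Bool Bool (a n) (b n),
        ∀ x : List Bool, x.length = n →
          M.SolvesOn x (decide (x.count false < x.count true)) := by
  filter_upwards [bapo_eventually_bound a b ha hb] with n hE1
  rintro ⟨M, hM⟩
  classical
  set m := 2^(a n) with hm
  have hm1 : 1 ≤ m := Nat.one_le_two_pow
  set k := n - m with hk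
  have hq : (m+1) * (b n + 1) = b n * (m+1) + (m+1) := by ring
  obtain ⟨D, v, hDcard, hG⟩ := bapo_template M k ((List.range (m+1)).map (fun s => bapoSuf s m))
  rw [List.length_map, List.length_range] at hDcard
  set cD := (D.filter fun i => v i = true).card with hcDdef
  have hcDle : cD ≤ D.card := Finset.card_filter_le _ _
  have hDk : D.card ≤ k := le_trans (Finset.card_le_univ D) (by simp)
  set t0 := (n+2)/2 - (m+1) with ht0
  have hex : ∀ t : ℕ, ∃ u : Fin k → Bool, t ∈ Finset.Icc t0 (t0 + (m+1)) →
      ((∀ i ∈ D, u i = v i) ∧ (List.ofFn u).count true = t) := by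
    intro t
    by_cases ht : t ∈ Finset.Icc t0 (t0 + (m+1))
    · rw [Finset.mem_Icc] at ht
      obtain ⟨u, hu⟩ := bapo_exists_prefix D v t (by omega) (by omega)
      exact ⟨u, fun _ => hu⟩
    · exact ⟨fun _ => false, fun h => absurd h ht⟩
  obtain ⟨uu, huu⟩ := Classical.axiomOfChoice hex
  -- the key fooling argument
  have key : ∀ t t', t ∈ Finset.Icc t0 (t0+(m+1)) → t' ∈ Finset.Icc t0 (t0+(m+1)) → t < t' →
      M.f (List.ofFn (uu t)) = M.f (List.ofFn (uu t')) → False := by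
    intro t t' htm htm' hlt hfe
    set s := (n+2)/2 - t' with hs
    rw [Finset.mem_Icc] at htm htm'
    have hsm : s ≤ m := by omega
    have hsmem : bapoSuf s m ∈ (List.range (m+1)).map (fun s => bapoSuf s m) :=
      List.mem_map_of_mem (List.mem_range.mpr (by omega))
    obtain ⟨G, hGspec⟩ := hG (bapoSuf s m) hsmem
    have main : ∀ tt, tt ∈ Finset.Icc t0 (t0+(m+1)) →
        M.h (M.f (List.ofFn (uu tt))) G (bapoSuf s m) k
          = decide ((k - tt) + (m - s) < tt + s) := by
      intro tt httm
      obtain ⟨hcompl, hcount⟩ := huu tt httm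
      have hplen : (List.ofFn (uu tt)).length = k := List.length_ofFn
      have httk : tt ≤ k := by
        have h : List.count true (List.ofFn (uu tt)) ≤ (List.ofFn (uu tt)).length := List.count_le_length
        rwa [hcount, hplen] at h
      set x := List.ofFn (uu tt) ++ bapoSuf s m with hx
      have hsuflen : (bapoSuf s m).length = m := bapoSuf_length hsm
      have hxlen : x.length = n := by
        rw [hx, List.length_append, hplen, hsuflen]; omega
      have htake : x.take k = List.ofFn (uu tt) := List.take_left' hplen
      have hdrop : x.drop k = bapoSuf s m := List.drop_left' hplen
      have hcomp' : ∀ i ∈ D, ∀ (h : (i:ℕ) < (List.ofFn (uu tt)).length),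
          (List.ofFn (uu tt)).get ⟨(i:ℕ), h⟩ = v i := by
        intro i hi h
        rw [List.get_ofFn]
        have hcast : (Fin.cast (List.length_ofFn (f := uu tt)) ⟨(i:ℕ), h⟩) = i := Fin.ext rfl
        rw [hcast, hcompl i hi]
      obtain ⟨hGsub, hGcard⟩ := hGspec (List.ofFn (uu tt)) hplen hcomp'
      have hsolve := hM x hxlen k (by rw [hxlen]; omega) G
        (by rw [htake, hdrop]; exact hGsub) (by rw [htake, hdrop]; exact hGcard)
      rw [htake, hdrop] at hsolve
      rw [hsolve]
      have hct : x.count true = tt + s := by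
        rw [hx, List.count_append, hcount, bapoSuf_count_true]
      have hcf : x.count false = (k - tt) + (m - s) := by
        have h1 := bapo_count_false_add_count_true x
        rw [hxlen, hct] at h1
        omega
      rw [hct, hcf]
    have e1 := main t (Finset.mem_Icc.mpr htm)
    have e2 := main t' (Finset.mem_Icc.mpr htm')
    rw [hfe] at e1
    rw [e1] at e2
    have hiff := decide_eq_decide.mp e2
    omega
  have hcardlt : (Finset.univ : Finset (Fin (a n) → Bool)).card <
      (Finset.Icc t0 (t0 + (m+1))).card := by
    rw [Finset.card_univ, Nat.card_Icc]
    have hcf : Fintype.card (Fin (a n) → Bool) = 2^(a n) := by simp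
    rw [hcf]; omega
  obtain ⟨t, htmem, t', htmem', hne, hfeq⟩ :=
    Finset.exists_ne_map_eq_of_card_lt_of_maps_to hcardlt
      (fun t _ => Finset.mem_univ (M.f (List.ofFn (uu t))))
  rcases lt_or_gt_of_ne hne with hlt | hlt
  · exact key t t' htmem htmem' hlt hfeq
  · exact key t' t htmem' htmem hlt hfeq.symm
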